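/- Let x, y ∈ ℝ^n and suppose that xᵀN x ≤ yᵀN y for every positive semidefinite matrix N ∈ S₊^n. Then there exists a real α with −1 ≤ α ≤ 1 such that x = α y. -/

import Mathlib

open Matrix

lemma quad_vecMulVec {n : ℕ} (v z : Fin n → ℝ) :
    z ⬝ᵥ (vecMulVec v v *ᵥ z) = (v ⬝ᵥ z) ^ 2 := by
  simp only [dotProduct, mulVec, vecMulVec_apply, dotProduct]
  rw [sq, Finset.sum_mul]
  congr 1; ext i
  rw [Finset.mul_sum, Finset.mul_sum]
  congr 1; ext j; ring

lemma vecMulVec_posSemidef {n : ℕ} (v : Fin n → ℝ) :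
    (vecMulVec v v).PosSemidef := by
  refine .of_dotProduct_mulVec_nonneg ?_ ?_
  · ext i j
    simp [conjTranspose, vecMulVec_apply, mul_comm]
  · intro z
    simp only [star_trivial, RCLike.ofReal_real_eq_id, id]
    rw [quad_vecMulVec]
    positivity

/-- If `xᵀNx ≤ yᵀNy` for every positive semidefinite matrix `N`, then
`x = α • y` for some `α` with `-1 ≤ α ≤ 1`. -/
theorem collinear_of_quadForm_le (n : ℕ) (x y : Fin n → ℝ)
    (h : ∀ N : Matrix (Fin n) (Fin n) ℝ, N.PosSemidef →
      x ⬝ᵥ (N *ᵥ x) ≤ y ⬝ᵥ (N *ᵥ y)) :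
    ∃ α : ℝ, -1 ≤ α ∧ α ≤ 1 ∧ x = α • y := by
  have key : ∀ v : Fin n → ℝ, (v ⬝ᵥ x) ^ 2 ≤ (v ⬝ᵥ y) ^ 2 := by
    intro v
    have := h (vecMulVec v v) (vecMulVec_posSemidef v)
    rwa [quad_vecMulVec, quad_vecMulVec] at this
  by_cases hy : y = 0
  · refine ⟨0, by norm_num, by norm_num, ?_⟩
    have hx := key x
    simp [hy] at hx
    have hxx : x ⬝ᵥ x = 0 := by simp [hx]
    have := (dotProduct_self_eq_zero (v := x)).mp hxx
    simp [this]
  · have hyy : y ⬝ᵥ y > 0 := by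
      rcases lt_or_eq_of_le (Finset.sum_nonneg fun i _ => mul_self_nonneg (y i) : (0:ℝ) ≤ y ⬝ᵥ y) with h' | h'
      · exact h'
      · exact absurd (dotProduct_self_eq_zero.mp h'.symm) hy
    set α := (x ⬝ᵥ y) / (y ⬝ᵥ y) with hα
    set w : Fin n → ℝ := x - α • y with hw
    have hwy : w ⬝ᵥ y = 0 := by
      simp [hw, sub_dotProduct, smul_dotProduct, hα, div_mul_cancel₀ _ (ne_of_gt hyy)]
    have hwx : w ⬝ᵥ x = 0 := by
      have := key w
      have hwy' : (w ⬝ᵥ y) ^ 2 = 0 := by rw [hwy]; ring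
      nlinarith [sq_nonneg (w ⬝ᵥ x)]
    have hww : w ⬝ᵥ w = 0 := by
      have : w ⬝ᵥ w = w ⬝ᵥ x - α * (w ⬝ᵥ y) := by
        simp [hw, dotProduct_sub, dotProduct_smul, smul_eq_mul]
      rw [this, hwx, hwy]; ring
    have hw0 : w = 0 := dotProduct_self_eq_zero.mp hww
    have hxy : x = α • y := by
      have := sub_eq_zero.mp (hw ▸ hw0 : x - α • y = 0)
      exact this
    have hα2 : α ^ 2 ≤ 1 := by
      have := key y
      rw [hxy] at this
      have : (α * (y ⬝ᵥ y)) ^ 2 ≤ (y ⬝ᵥ y) ^ 2 := by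
        simpa [dotProduct_smul, smul_eq_mul, dotProduct_comm] using this
      have h1 : α ^ 2 * (y ⬝ᵥ y) ^ 2 ≤ 1 * (y ⬝ᵥ y) ^ 2 := by nlinarith [this]
      exact le_of_mul_le_mul_right h1 (by positivity)
    exact ⟨α, by nlinarith [sq_nonneg (α + 1)], by nlinarith [sq_nonneg (α - 1)], hxy⟩
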